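/- Let g : ℝⁿ → ℝ be C¹ with σ-square-integrable gradient and Q ∈ ℝ^{n×n} orthogonal. Define g'(γ') = g(Qγ') and σ'(γ') = σ(Qγ'). Then C' = ∫ ∇g'(γ')∇g'(γ')ᵀ σ'(γ') dγ' equals Qᵀ C Q, where C = ∫ ∇g(γ)∇g(γ)ᵀ σ(γ) dγ. In particular C' and C have the same eigenvalues, and if u is an eigenvector of C then Qᵀu is an eigenvector of C' with the same eigenvalue. -/

import Mathlib

open Matrix MeasureTheory

theorem grad_comp_iso {E : Type*} [NormedAddCommGroup E] [InnerProductSpace ℝ E]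
    [CompleteSpace E]
    (e : E ≃ₗᵢ[ℝ] E) (g : E → ℝ) (v : E) (x : E)
    (h : HasGradientAt g v (e x)) : HasGradientAt (fun y => g (e y)) (e.symm v) x := by
  have hfd : HasFDerivAt (fun y => g (e y))
      ((InnerProductSpace.toDual ℝ E v).comp (e.toContinuousLinearEquiv : E →L[ℝ] E)) x :=
    (h.hasFDerivAt).comp x (e.toContinuousLinearEquiv.hasFDerivAt)
  have heq : ((InnerProductSpace.toDual ℝ E v).comp (e.toContinuousLinearEquiv : E →L[ℝ] E))
      = InnerProductSpace.toDual ℝ E (e.symm v) := by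
    ext h'
    simp only [ContinuousLinearMap.comp_apply, InnerProductSpace.toDual_apply_apply]
    calc (inner ℝ v (e.toContinuousLinearEquiv h') : ℝ) = inner ℝ (e (e.symm v)) (e h') := by simp
      _ = inner ℝ (e.symm v) h' := e.inner_map_map _ _
  rw [heq] at hfd
  simpa using hfd.hasGradientAt

theorem stmt14 (n : ℕ)
    (g : EuclideanSpace ℝ (Fin n) → ℝ) (hg : ContDiff ℝ 1 g)
    (Gg : EuclideanSpace ℝ (Fin n) → EuclideanSpace ℝ (Fin n))
    (hGg : ∀ γ, HasGradientAt g (Gg γ) γ)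
    (σ : EuclideanSpace ℝ (Fin n) → ℝ)
    (hσ0 : ∀ γ, 0 ≤ σ γ) (hσ1 : ∫ γ, σ γ = 1)
    (Q : Matrix (Fin n) (Fin n) ℝ) (hQ : Qᵀ * Q = 1) (hdet : Q.det = 1)
    (g' : EuclideanSpace ℝ (Fin n) → ℝ)
    (hg' : ∀ γ' : EuclideanSpace ℝ (Fin n), g' γ' = g (WithLp.toLp 2 (Q *ᵥ γ' : Fin n → ℝ)))
    (Gg' : EuclideanSpace ℝ (Fin n) → EuclideanSpace ℝ (Fin n))
    (hGg' : ∀ γ', HasGradientAt g' (Gg' γ') γ')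
    (C : Matrix (Fin n) (Fin n) ℝ)
    (hC : ∀ i j, C i j = ∫ γ, Gg γ i * Gg γ j * σ γ)
    (hIntC : ∀ i j, Integrable (fun γ => Gg γ i * Gg γ j * σ γ))
    (C' : Matrix (Fin n) (Fin n) ℝ)
    (hC' : ∀ i j, C' i j = ∫ γ' : EuclideanSpace ℝ (Fin n),
      Gg' γ' i * Gg' γ' j * σ (WithLp.toLp 2 (Q *ᵥ γ' : Fin n → ℝ)))
    (hIntC' : ∀ i j, Integrable (fun γ' : EuclideanSpace ℝ (Fin n) =>
      Gg' γ' i * Gg' γ' j * σ (WithLp.toLp 2 (Q *ᵥ γ' : Fin n → ℝ)))) :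
    C' = Qᵀ * C * Q ∧
    (∀ (μ : ℝ) (u : Fin n → ℝ), C *ᵥ u = μ • u →
      C' *ᵥ (Qᵀ *ᵥ u) = μ • (Qᵀ *ᵥ u)) ∧
    (∀ μ : ℝ, (∃ u : Fin n → ℝ, u ≠ 0 ∧ C *ᵥ u = μ • u)
      ↔ ∃ u : Fin n → ℝ, u ≠ 0 ∧ C' *ᵥ u = μ • u) := by
  have hQQ : Q * Qᵀ = 1 := mul_eq_one_comm.mp hQ
  -- the orthogonal transformation as a linear isometry equivalence
  let L : EuclideanSpace ℝ (Fin n) ≃ₗ[ℝ] EuclideanSpace ℝ (Fin n) :=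
  { toFun := fun x => (WithLp.equiv 2 _).symm (Q *ᵥ (WithLp.equiv 2 _ x))
    invFun := fun x => (WithLp.equiv 2 _).symm (Qᵀ *ᵥ (WithLp.equiv 2 _ x))
    map_add' := by intro x y; ext i; simp [Matrix.mulVec_add]
    map_smul' := by intro c x; ext i; simp [Matrix.mulVec_smul]
    left_inv := by intro x; ext i; simp [Matrix.mulVec_mulVec, hQ]
    right_inv := by intro x; ext i; simp [Matrix.mulVec_mulVec, hQQ] }
  have hdot : ∀ x y : Fin n → ℝ, (Q *ᵥ x) ⬝ᵥ (Q *ᵥ y) = x ⬝ᵥ y := by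
    intro x y
    rw [Matrix.dotProduct_mulVec, ← Matrix.vecMul_transpose, Matrix.vecMul_vecMul, hQ,
      Matrix.vecMul_one]
  let e : EuclideanSpace ℝ (Fin n) ≃ₗᵢ[ℝ] EuclideanSpace ℝ (Fin n) :=
    L.isometryOfInner (by
      intro x y
      have := hdot (WithLp.equiv 2 _ x) (WithLp.equiv 2 _ y)
      simpa [L, PiLp.inner_apply, dotProduct, mul_comm] using this)
  have he : ∀ γ' : EuclideanSpace ℝ (Fin n), e γ' = ((Q *ᵥ γ' : Fin n → ℝ)) := fun _ => rfl
  have hesymm : ∀ v : EuclideanSpace ℝ (Fin n), e.symm v = ((Qᵀ *ᵥ v : Fin n → ℝ)) :=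
    fun _ => rfl
  -- gradient transformation
  have hGrad : ∀ γ' : EuclideanSpace ℝ (Fin n), Gg' γ' = e.symm (Gg (e γ')) := by
    intro γ'
    have h1 : HasGradientAt (fun y => g (e y)) (e.symm (Gg (e γ'))) γ' :=
      grad_comp_iso e g (Gg (e γ')) γ' (hGg (e γ'))
    have h2 : (fun y => g (e y)) = g' := by
      funext y; rw [hg' y]; rfl
    rw [h2] at h1
    exact (hGg' γ').unique h1
  have hGrad' : ∀ (γ' : EuclideanSpace ℝ (Fin n)) (i : Fin n),
      Gg' γ' i = ∑ k, Q k i * Gg (e γ') k := by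
    intro γ' i
    rw [hGrad γ']
    show (Qᵀ *ᵥ (Gg (e γ') : Fin n → ℝ)) i = _
    simp [Matrix.mulVec, dotProduct, Matrix.transpose_apply]
  -- the key computation
  have key : ∀ i j, C' i j = ∑ k, ∑ l, Q k i * Q l j * C k l := by
    intro i j
    have step1 : C' i j = ∫ γ' : EuclideanSpace ℝ (Fin n),
        (fun γ : EuclideanSpace ℝ (Fin n) =>
          (∑ k, Q k i * Gg γ k) * (∑ l, Q l j * Gg γ l) * σ γ) (e γ') := by
      rw [hC' i j]
      congr 1
      funext γ'
      rw [hGrad' γ' i, hGrad' γ' j]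
      rfl
    have step2 := MeasureTheory.integral_comp e (fun γ : EuclideanSpace ℝ (Fin n) =>
      (∑ k, Q k i * Gg γ k) * (∑ l, Q l j * Gg γ l) * σ γ)
    rw [step1, step2]
    have expand : ∀ γ : EuclideanSpace ℝ (Fin n),
        (∑ k, Q k i * Gg γ k) * (∑ l, Q l j * Gg γ l) * σ γ
        = ∑ k, ∑ l, Q k i * Q l j * (Gg γ k * Gg γ l * σ γ) := by
      intro γ
      rw [Finset.sum_mul_sum, Finset.sum_mul]
      congr 1; funext k
      rw [Finset.sum_mul]
      congr 1; funext l
      ring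
    simp_rw [expand]
    rw [integral_finset_sum _ (fun k _ => integrable_finset_sum _
      (fun l _ => ((hIntC k l).const_mul _)))]
    congr 1; funext k
    rw [integral_finset_sum _ (fun l _ => ((hIntC k l).const_mul _))]
    congr 1; funext l
    rw [MeasureTheory.integral_const_mul _ _, hC k l]
  have hCC : C' = Qᵀ * C * Q := by
    ext i j
    rw [key i j]
    simp only [Matrix.mul_apply, Matrix.transpose_apply, Finset.sum_mul]
    rw [Finset.sum_comm]
    congr 1; funext l
    congr 1; funext k
    ring
  have part2 : ∀ (μ : ℝ) (u : Fin n → ℝ), C *ᵥ u = μ • u →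
      C' *ᵥ (Qᵀ *ᵥ u) = μ • (Qᵀ *ᵥ u) := by
    intro μ u hu
    have h3 : Q *ᵥ (Qᵀ *ᵥ u) = u := by rw [Matrix.mulVec_mulVec, hQQ, Matrix.one_mulVec]
    rw [hCC, ← Matrix.mulVec_mulVec, ← Matrix.mulVec_mulVec, h3, hu, Matrix.mulVec_smul]
  refine ⟨hCC, part2, ?_⟩
  intro μ
  constructor
  · rintro ⟨u, hu0, hu⟩
    refine ⟨Qᵀ *ᵥ u, ?_, part2 μ u hu⟩
    intro h0
    apply hu0
    have : Q *ᵥ (Qᵀ *ᵥ u) = Q *ᵥ 0 := by rw [h0]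
    rwa [Matrix.mulVec_mulVec, hQQ, Matrix.one_mulVec, Matrix.mulVec_zero] at this
  · rintro ⟨u, hu0, hu⟩
    have hC2 : C = Q * C' * Qᵀ := by
      rw [hCC, show Q * (Qᵀ * C * Q) * Qᵀ = (Q * Qᵀ) * C * (Q * Qᵀ) by noncomm_ring, hQQ,
        Matrix.one_mul, Matrix.mul_one]
    refine ⟨Q *ᵥ u, ?_, ?_⟩
    · intro h0
      apply hu0
      have : Qᵀ *ᵥ (Q *ᵥ u) = Qᵀ *ᵥ 0 := by rw [h0]
      rwa [Matrix.mulVec_mulVec, hQ, Matrix.one_mulVec, Matrix.mulVec_zero] at this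
    · have h4 : Qᵀ *ᵥ (Q *ᵥ u) = u := by rw [Matrix.mulVec_mulVec, hQ, Matrix.one_mulVec]
      rw [hC2, ← Matrix.mulVec_mulVec, ← Matrix.mulVec_mulVec, h4, hu, Matrix.mulVec_smul]
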